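/- Let V and W be finite-dimensional real vector spaces, and let C ⊆ V and D ⊆ W be pointed polyhedral cones with Submodule.span ℝ C = ⊤ and Submodule.span ℝ D = ⊤. Then the hom-cone Hom(C,D) = {f : V →ₗ[ℝ] W | f '' C ⊆ D} satisfies: (i) Hom(C,D) ∩ (−Hom(C,D)) = {0}, i.e., Hom(C,D) is pointed; and (ii) the linear span of Hom(C,D) is the whole space of linear maps V →ₗ[ℝ] W; in particular Hom(C,D) is a pointed cone of dimension (dim V)·(dim W). -/

import Mathlib

open scoped BigOperators

/-- A polyhedral cone: the set of all nonnegative linear combinations of a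
finite set of vectors. -/
def IsPolyhedralCone {V : Type*} [AddCommGroup V] [Module ℝ V] (C : Set V) : Prop :=
  ∃ s : Finset V,
    C = {x | ∃ c : V → ℝ, (∀ v, 0 ≤ c v) ∧ x = ∑ v ∈ s, c v • v}

open scoped BigOperators

namespace ConeAux

variable {E : Type*} [AddCommGroup E] [Module ℝ E]

/-- The cone generated by a finite family. -/
def cone {ι : Type*} (s : Finset ι) (g : ι → E) : Set E :=
  {x | ∃ c : ι → ℝ, (∀ i, 0 ≤ c i) ∧ x = ∑ i ∈ s, c i • g i}

theorem cone_mono {ι : Type*} {s t : Finset ι} (h : s ⊆ t) (g : ι → E) :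
    cone s g ⊆ cone t g := by
  classical
  rintro x ⟨c, hc, rfl⟩
  refine ⟨fun i => if i ∈ s then c i else 0, fun i => ?_, ?_⟩
  · dsimp only; split
    · exact hc i
    · exact le_rfl
  · rw [← Finset.sum_subset h (fun i _ hi => by simp [hi])]
    exact Finset.sum_congr rfl fun i hi => by simp [hi]

theorem zero_mem_cone {ι : Type*} (s : Finset ι) (g : ι → E) : (0 : E) ∈ cone s g :=
  ⟨0, fun _ => le_rfl, by simp⟩

theorem caratheodory {ι : Type*} (s : Finset ι) (g : ι → E) (x : E) (hx : x ∈ cone s g) :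
    ∃ t : Finset ι, t ⊆ s ∧ LinearIndependent ℝ (fun i : t => g i) ∧ x ∈ cone t g := by
  classical
  induction s using Finset.strongInduction with
  | _ s IH =>
    obtain ⟨c, hc, rfl⟩ := hx
    by_cases hli : LinearIndependent ℝ (fun i : s => g i)
    · exact ⟨s, le_refl s, hli, c, hc, rfl⟩
    rw [Fintype.not_linearIndependent_iff] at hli
    obtain ⟨d₀, hsum, j, hj⟩ := hli
    have key : ∀ d : ι → ℝ, (∑ i ∈ s, d i • g i = 0) → (∃ i ∈ s, 0 < d i) →
        ∃ t : Finset ι, t ⊆ s ∧ LinearIndependent ℝ (fun i : t => g i)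
          ∧ (∑ i ∈ s, c i • g i) ∈ cone t g := by
      rintro d hdsum ⟨i₁, hi₁, hdi₁⟩
      set P := (s.filter (fun i => 0 < d i)) with hP
      have hPne : P.Nonempty := ⟨i₁, Finset.mem_filter.2 ⟨hi₁, hdi₁⟩⟩
      obtain ⟨i₀, hi₀P, hmin⟩ := P.exists_min_image (fun i => c i / d i) hPne
      have hi₀s : i₀ ∈ s := (Finset.mem_filter.1 hi₀P).1
      have hdi₀ : 0 < d i₀ := (Finset.mem_filter.1 hi₀P).2
      set r := c i₀ / d i₀ with hr
      have hrpos : 0 ≤ r := div_nonneg (hc _) hdi₀.le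
      set c' : ι → ℝ := fun i => if i ∈ s then c i - r * d i else 0 with hc'
      have hc'nonneg : ∀ i, 0 ≤ c' i := by
        intro i
        simp only [hc']
        split
        case isTrue hi =>
          rcases le_or_gt (d i) 0 with hd | hd
          · have : r * d i ≤ 0 := mul_nonpos_of_nonneg_of_nonpos hrpos hd
            linarith [hc i]
          · have hiP : i ∈ P := Finset.mem_filter.2 ⟨hi, hd⟩
            have h1 : r ≤ c i / d i := hmin i hiP
            have h2 : r * d i ≤ c i := (le_div_iff₀ hd).1 h1
            linarith
        case isFalse => exact le_rfl
      have hc'i₀ : c' i₀ = 0 := by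
        simp only [hc', if_pos hi₀s, hr]
        field_simp
        ring
      have hxc' : (∑ i ∈ s, c i • g i) = ∑ i ∈ s, c' i • g i := by
        calc ∑ i ∈ s, c i • g i
            = (∑ i ∈ s, c i • g i) - r • (∑ i ∈ s, d i • g i) := by
              rw [hdsum, smul_zero, sub_zero]
          _ = ∑ i ∈ s, (c i - r * d i) • g i := by
              rw [Finset.smul_sum, ← Finset.sum_sub_distrib]
              exact Finset.sum_congr rfl fun i _ => by rw [sub_smul, smul_smul]
          _ = ∑ i ∈ s, c' i • g i :=
              (Finset.sum_congr rfl fun i hi => by simp only [hc', if_pos hi]).symm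
      have hxshrink : (∑ i ∈ s, c i • g i) ∈ cone (s.erase i₀) g := by
        refine ⟨c', hc'nonneg, ?_⟩
        rw [hxc']
        exact (Finset.sum_erase _ (by rw [hc'i₀, zero_smul])).symm
      obtain ⟨t, hts, hli, hxt⟩ := IH (s.erase i₀) (Finset.erase_ssubset hi₀s) hxshrink
      exact ⟨t, hts.trans (Finset.erase_subset _ _), hli, hxt⟩
    rcases lt_or_gt_of_ne hj with hneg | hpos
    · refine key (fun i => -(if h : i ∈ s then d₀ ⟨i, h⟩ else 0)) ?_ ⟨j, j.2, by simp [j.2]; linarith⟩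
      simp only [neg_smul, Finset.sum_neg_distrib, neg_eq_zero]
      rw [← Finset.sum_attach s (fun i => (if h : i ∈ s then d₀ ⟨i, h⟩ else 0) • g i)]
      simpa using hsum
    · refine key (fun i => if h : i ∈ s then d₀ ⟨i, h⟩ else 0) ?_ ⟨j, j.2, by simp [j.2, hpos]⟩
      rw [← Finset.sum_attach s (fun i => (if h : i ∈ s then d₀ ⟨i, h⟩ else 0) • g i)]
      simpa using hsum

section Normed

open scoped InnerProductSpace

variable {E : Type*} [NormedAddCommGroup E] [InnerProductSpace ℝ E] [FiniteDimensional ℝ E]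

theorem isClosed_cone_li {ι : Type*} (t : Finset ι) (g : ι → E)
    (hli : LinearIndependent ℝ (fun i : t => g i)) : IsClosed (cone t g) := by
  classical
  set F := Fintype.linearCombination ℝ (fun i : t => g i) with hF
  have hinj : LinearMap.ker F = ⊥ := by
    rw [LinearMap.ker_eq_bot']
    intro c hc
    rw [hF, Fintype.linearCombination_apply] at hc
    exact funext (Fintype.linearIndependent_iff.1 hli c hc)
  have hemb := LinearMap.isClosedEmbedding_of_injective (𝕜 := ℝ) hinj
  have himg : cone t g = F '' {c : t → ℝ | ∀ i, 0 ≤ c i} := by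
    ext x
    constructor
    · rintro ⟨c, hc, rfl⟩
      refine ⟨fun i => c i, fun i => hc i, ?_⟩
      rw [hF, Fintype.linearCombination_apply]
      exact Finset.sum_coe_sort t (fun i => c i • g i)
    · rintro ⟨c, hc, rfl⟩
      refine ⟨fun i => if h : i ∈ t then c ⟨i, h⟩ else 0, fun i => ?_, ?_⟩
      · dsimp only; split
        · exact hc _
        · exact le_rfl
      · rw [hF, Fintype.linearCombination_apply, ← Finset.sum_coe_sort t]
        exact (Finset.sum_congr rfl fun i _ => by simp [i.2]).symm
  have hclosed : IsClosed {c : t → ℝ | ∀ i, 0 ≤ c i} := by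
    have : {c : t → ℝ | ∀ i, 0 ≤ c i} = ⋂ i, {c : t → ℝ | 0 ≤ c i} := by
      ext c; simp [Set.mem_iInter]
    rw [this]
    exact isClosed_iInter fun i => isClosed_le continuous_const (continuous_apply i)
  rw [himg]
  exact hemb.isClosedMap _ hclosed

theorem isClosed_cone {ι : Type*} (s : Finset ι) (g : ι → E) : IsClosed (cone s g) := by
  classical
  have hrw : cone s g = ⋃ t ∈ s.powerset,
      ⋃ (_ : LinearIndependent ℝ (fun i : t => g i)), cone t g := by
    ext x
    simp only [Set.mem_iUnion, Finset.mem_powerset]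
    constructor
    · intro hx
      obtain ⟨t, hts, hli, hxt⟩ := caratheodory s g x hx
      exact ⟨t, hts, hli, hxt⟩
    · rintro ⟨t, hts, _, hxt⟩
      exact cone_mono hts g hxt
  rw [hrw]
  apply Set.Finite.isClosed_biUnion (s.powerset.finite_toSet)
  intro t _
  rcases em (LinearIndependent ℝ (fun i : t => g i)) with h | h
  · simpa [h] using isClosed_cone_li t g h
  · simp [h]

/-- The cone as a convex cone. -/
def coneCC {ι : Type*} (s : Finset ι) (g : ι → E) : ConvexCone ℝ E where
  carrier := cone s g
  smul_mem' := by
    rintro r hr x ⟨c, hc, rfl⟩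
    refine ⟨fun i => r * c i, fun i => mul_nonneg hr.le (hc i), ?_⟩
    rw [Finset.smul_sum]
    exact Finset.sum_congr rfl fun i _ => by dsimp only; rw [smul_smul]
  add_mem' := by
    rintro x ⟨c, hc, rfl⟩ y ⟨c', hc', rfl⟩
    refine ⟨fun i => c i + c' i, fun i => add_nonneg (hc i) (hc' i), ?_⟩
    rw [← Finset.sum_add_distrib]
    exact Finset.sum_congr rfl fun i _ => by dsimp only; rw [add_smul]

theorem farkas {ι : Type*} (s : Finset ι) (g : ι → E) (x : E)
    (hx : ∀ y : E, (∀ z ∈ cone s g, 0 ≤ ⟪z, y⟫_ℝ) → 0 ≤ ⟪x, y⟫_ℝ) : x ∈ cone s g := by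
  by_contra h
  let K : ProperCone ℝ E := ⟨(coneCC s g).toPointedCone
    (ConvexCone.Pointed.of_nonempty_of_isClosed ⟨0, zero_mem_cone s g⟩ (isClosed_cone s g)),
    isClosed_cone s g⟩
  obtain ⟨y, hy1, hy2⟩ := ProperCone.hyperplane_separation' K (show x ∉ K from h)
  have h1 := hx y (fun z hz => hy1 z hz)
  rw [real_inner_comm] at h1 hy2
  linarith

theorem span_dual_eq_top {ι : Type*} (s : Finset ι) (g : ι → E)
    (hpointed : cone s g ∩ (-(cone s g)) = {0}) :
    Submodule.span ℝ {y : E | ∀ z ∈ cone s g, 0 ≤ ⟪z, y⟫_ℝ} = ⊤ := by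
  set S := {y : E | ∀ z ∈ cone s g, 0 ≤ ⟪z, y⟫_ℝ} with hS
  by_contra hne
  have hbot : (Submodule.span ℝ S)ᗮ ≠ ⊥ := by
    simp only [ne_eq, Submodule.orthogonal_eq_bot_iff]
    exact hne
  obtain ⟨x, hxmem, hx0⟩ := Submodule.exists_mem_ne_zero_of_ne_bot hbot
  have hzero : ∀ y ∈ S, ⟪x, y⟫_ℝ = 0 := by
    intro y hy
    have := (Submodule.mem_orthogonal (Submodule.span ℝ S) x).1 hxmem y (Submodule.subset_span hy)
    rwa [real_inner_comm] at this
  have hxc : x ∈ cone s g := farkas s g x fun y hy => (hzero y hy).ge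
  have hxc' : -x ∈ cone s g := farkas s g (-x) fun y hy => by
    rw [inner_neg_left, hzero y hy, neg_zero]
  have : x ∈ cone s g ∩ (-(cone s g)) := ⟨hxc, by simpa using hxc'⟩
  rw [hpointed] at this
  exact hx0 this

end Normed

section Transfer

open scoped InnerProductSpace

variable {V : Type*} [AddCommGroup V] [Module ℝ V] [FiniteDimensional ℝ V]

theorem span_dual_functionals (s : Finset V)
    (hpointed : cone s (fun v : V => v) ∩ (-(cone s (fun v : V => v))) = {0}) :
    Submodule.span ℝ {φ : V →ₗ[ℝ] ℝ | ∀ x ∈ cone s (fun v : V => v), 0 ≤ φ x} = ⊤ := by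
  classical
  set E := EuclideanSpace ℝ (Fin (Module.finrank ℝ V)) with hE
  have e : V ≃ₗ[ℝ] E := LinearEquiv.ofFinrankEq _ _ finrank_euclideanSpace_fin.symm
  set C := cone s (fun v : V => v) with hCdef
  set C' := cone s (fun v : V => (e v : E)) with hC'def
  have h1 : ∀ x : V, x ∈ C ↔ e x ∈ C' := by
    intro x
    constructor
    · rintro ⟨c, hc, rfl⟩
      exact ⟨c, hc, by rw [map_sum]; exact Finset.sum_congr rfl fun i _ => by rw [map_smul]⟩
    · rintro ⟨c, hc, hx⟩
      refine ⟨c, hc, e.injective ?_⟩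
      rw [hx, map_sum]
      exact Finset.sum_congr rfl fun i _ => by rw [map_smul]
  have hpointed' : C' ∩ (-C') = {0} := by
    ext y
    constructor
    · rintro ⟨hy1, hy2⟩
      have hx1 : e.symm y ∈ C := (h1 _).2 (by rwa [e.apply_symm_apply])
      have hx2 : -(e.symm y) ∈ C := (h1 _).2 (by
        rw [map_neg, e.apply_symm_apply]; exact Set.mem_neg.1 hy2)
      have : e.symm y ∈ C ∩ (-C) := ⟨hx1, Set.mem_neg.2 hx2⟩
      rw [hpointed] at this
      have : e.symm y = 0 := this
      simpa using congrArg e this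
    · rintro rfl
      exact ⟨zero_mem_cone s _, by rw [Set.mem_neg, neg_zero]; exact zero_mem_cone s _⟩
  have hdual := span_dual_eq_top s (fun v : V => (e v : E)) hpointed'
  set Ψ : E →ₗ[ℝ] (V →ₗ[ℝ] ℝ) :=
    { toFun := fun y =>
        { toFun := fun x => ⟪e x, y⟫_ℝ
          map_add' := fun a b => by simp [inner_add_left]
          map_smul' := fun r a => by simp [inner_smul_left] }
      map_add' := fun y₁ y₂ => by ext x; simp [inner_add_right]
      map_smul' := fun r y => by ext x; simp [inner_smul_right] } with hΨ
  have hsurj : Function.Surjective Ψ := by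
    intro φ
    set ψ : E →ₗ[ℝ] ℝ := φ.comp (e.symm : E →ₗ[ℝ] V) with hψ
    refine ⟨(InnerProductSpace.toDual ℝ E).symm (LinearMap.toContinuousLinearMap ψ), ?_⟩
    ext x
    simp only [hΨ, LinearMap.coe_mk, AddHom.coe_mk]
    rw [real_inner_comm, InnerProductSpace.toDual_symm_apply]
    simp [hψ]
  have hmaps : Ψ '' {y : E | ∀ z ∈ C', 0 ≤ ⟪z, y⟫_ℝ} ⊆ {φ : V →ₗ[ℝ] ℝ | ∀ x ∈ C, 0 ≤ φ x} := by
    rintro _ ⟨y, hy, rfl⟩ x hx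
    exact hy (e x) ((h1 x).1 hx)
  have : (⊤ : Submodule ℝ (V →ₗ[ℝ] ℝ))
      = Submodule.map Ψ (Submodule.span ℝ {y : E | ∀ z ∈ C', 0 ≤ ⟪z, y⟫_ℝ}) := by
    rw [hdual, Submodule.map_top, LinearMap.range_eq_top.2 hsurj]
  rw [Submodule.map_span] at this
  exact le_antisymm le_top (this.le.trans (Submodule.span_mono hmaps))

end Transfer

section Main

variable {V W : Type*}
    [AddCommGroup V] [Module ℝ V] [FiniteDimensional ℝ V]
    [AddCommGroup W] [Module ℝ W] [FiniteDimensional ℝ W]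

theorem main (C : Set V) (D : Set W)
    (hC : ∃ s : Finset V, C = {x | ∃ c : V → ℝ, (∀ v, 0 ≤ c v) ∧ x = ∑ v ∈ s, c v • v})
    (hD : ∃ s : Finset W, D = {x | ∃ c : W → ℝ, (∀ v, 0 ≤ c v) ∧ x = ∑ v ∈ s, c v • v})
    (hCpointed : C ∩ (-C) = {0}) (hDpointed : D ∩ (-D) = {0})
    (hCspan : Submodule.span ℝ C = ⊤) (hDspan : Submodule.span ℝ D = ⊤) :
    {f : V →ₗ[ℝ] W | f '' C ⊆ D} ∩ (-{f : V →ₗ[ℝ] W | f '' C ⊆ D}) = {0} ∧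
    Submodule.span ℝ {f : V →ₗ[ℝ] W | f '' C ⊆ D} = ⊤ ∧
    Module.finrank ℝ (V →ₗ[ℝ] W) = Module.finrank ℝ V * Module.finrank ℝ W := by
  obtain ⟨sC, hsC⟩ := hC
  obtain ⟨sD, hsD⟩ := hD
  have hCcone : C = cone sC (fun v : V => v) := hsC
  have hDcone : D = cone sD (fun v : W => v) := hsD
  have hD0 : (0 : W) ∈ D := by rw [hDcone]; exact zero_mem_cone sD _
  have hDsmul : ∀ (r : ℝ), 0 ≤ r → ∀ d ∈ D, r • d ∈ D := by
    rw [hDcone]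
    rintro r hr d ⟨c, hc, rfl⟩
    refine ⟨fun i => r * c i, fun i => mul_nonneg hr (hc i), ?_⟩
    rw [Finset.smul_sum]
    exact Finset.sum_congr rfl fun i _ => by dsimp only; rw [smul_smul]
  set H := {f : V →ₗ[ℝ] W | f '' C ⊆ D} with hH
  -- Part 1: pointedness
  have part1 : H ∩ (-H) = {0} := by
    ext f
    simp only [Set.mem_inter_iff, Set.mem_neg, Set.mem_singleton_iff, hH, Set.mem_setOf_eq]
    constructor
    · rintro ⟨h1, h2⟩
      have hzero : ∀ x ∈ C, f x = 0 := by
        intro x hx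
        have hfx : f x ∈ D := h1 ⟨x, hx, rfl⟩
        have hfx' : f x ∈ -D := Set.mem_neg.2 (by
          have : (-f) x ∈ D := h2 ⟨x, hx, rfl⟩
          simpa using this)
        have : f x ∈ D ∩ (-D) := ⟨hfx, hfx'⟩
        rwa [hDpointed] at this
      ext x
      have hx : x ∈ Submodule.span ℝ C := hCspan ▸ Submodule.mem_top
      refine Submodule.span_induction (p := fun x _ => f x = 0) hzero (map_zero f)
        (fun a b _ _ ha hb => show f (a + b) = 0 by
          rw [map_add, (ha : f a = 0), (hb : f b = 0), add_zero])
        (fun r a _ ha => show f (r • a) = 0 by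
          rw [map_smul, (ha : f a = 0), smul_zero]) hx
    · rintro rfl
      constructor
      · rintro _ ⟨x, _, rfl⟩; simpa using hD0
      · rintro _ ⟨x, _, rfl⟩; simpa using hD0
  refine ⟨part1, ?_, Module.finrank_linearMap ℝ ℝ V W⟩
  -- Part 2: span
  set M := Submodule.span ℝ H with hM
  have hCpointed' : cone sC (fun v : V => v) ∩ (-(cone sC (fun v : V => v))) = {0} := by
    rw [← hCcone]; exact hCpointed
  have hdualC := span_dual_functionals sC hCpointed'
  have hgen : ∀ (φ : V →ₗ[ℝ] ℝ), (∀ x ∈ C, 0 ≤ φ x) → ∀ d ∈ D, φ.smulRight d ∈ H := by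
    intro φ hφ d hd
    rintro _ ⟨x, hx, rfl⟩
    exact hDsmul (φ x) (hφ x hx) d hd
  have step1 : ∀ (φ : V →ₗ[ℝ] ℝ), (∀ x ∈ C, 0 ≤ φ x) → ∀ w : W, φ.smulRight w ∈ M := by
    intro φ hφ w
    have hw : w ∈ Submodule.span ℝ D := hDspan ▸ Submodule.mem_top
    refine Submodule.span_induction (p := fun w _ => φ.smulRight w ∈ M)
      (fun d hd => Submodule.subset_span (hgen φ hφ d hd))
      (show φ.smulRight (0 : W) ∈ M by
        have h : φ.smulRight (0 : W) = 0 := by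
          ext x; simp only [LinearMap.smulRight_apply, smul_zero, LinearMap.zero_apply]
        rw [h]; exact Submodule.zero_mem M)
      (fun a b _ _ ha hb => show φ.smulRight (a + b) ∈ M by
        have h : φ.smulRight (a + b) = φ.smulRight a + φ.smulRight b := by
          ext x; simp only [LinearMap.smulRight_apply, LinearMap.add_apply, smul_add]
        rw [h]; exact Submodule.add_mem M ha hb)
      (fun r a _ ha => show φ.smulRight (r • a) ∈ M by
        have h : φ.smulRight (r • a) = r • φ.smulRight a := by
          ext x
          simp only [LinearMap.smulRight_apply, LinearMap.smul_apply]
          rw [smul_comm]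
        rw [h]; exact Submodule.smul_mem M r ha) hw
  have step2 : ∀ (φ : V →ₗ[ℝ] ℝ) (w : W), φ.smulRight w ∈ M := by
    intro φ w
    have hφ : φ ∈ Submodule.span ℝ {φ : V →ₗ[ℝ] ℝ | ∀ x ∈ cone sC (fun v : V => v), 0 ≤ φ x} :=
      hdualC ▸ Submodule.mem_top
    refine Submodule.span_induction (p := fun φ _ => φ.smulRight w ∈ M)
      (fun ψ hψ => step1 ψ (by rw [hCcone]; exact hψ) w)
      (show (0 : V →ₗ[ℝ] ℝ).smulRight w ∈ M by
        have h : (0 : V →ₗ[ℝ] ℝ).smulRight w = 0 := by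
          ext x; simp only [LinearMap.smulRight_apply, LinearMap.zero_apply, zero_smul]
        rw [h]; exact Submodule.zero_mem M)
      (fun a b _ _ ha hb => show (a + b).smulRight w ∈ M by
        have h : (a + b).smulRight w = a.smulRight w + b.smulRight w := by
          ext x; simp only [LinearMap.smulRight_apply, LinearMap.add_apply, add_smul]
        rw [h]; exact Submodule.add_mem M ha hb)
      (fun r a _ ha => show (r • a).smulRight w ∈ M by
        have h : (r • a).smulRight w = r • a.smulRight w := by
          ext x
          simp only [LinearMap.smulRight_apply, LinearMap.smul_apply]
          rw [smul_eq_mul, mul_smul]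
        rw [h]; exact Submodule.smul_mem M r ha) hφ
  have : M = ⊤ := by
    refine le_antisymm le_top ?_
    intro f _
    set b := Module.finBasis ℝ V with hb
    have hf : f = ∑ i, (b.coord i).smulRight (f (b i)) := by
      ext x
      rw [LinearMap.sum_apply]
      simp only [LinearMap.smulRight_apply, Module.Basis.coord_apply]
      conv_lhs => rw [← b.sum_repr x]
      rw [map_sum]
      simp only [map_smul]
    rw [hf]
    exact Submodule.sum_mem M fun i _ => step2 _ _
  exact this

end Main

end ConeAux

theorem stmt_1 {V W : Type*}
    [AddCommGroup V] [Module ℝ V] [FiniteDimensional ℝ V]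
    [AddCommGroup W] [Module ℝ W] [FiniteDimensional ℝ W]
    (C : Set V) (D : Set W)
    (hC : IsPolyhedralCone C) (hD : IsPolyhedralCone D)
    (hCpointed : C ∩ (-C) = {0}) (hDpointed : D ∩ (-D) = {0})
    (hCspan : Submodule.span ℝ C = ⊤) (hDspan : Submodule.span ℝ D = ⊤) :
    {f : V →ₗ[ℝ] W | f '' C ⊆ D} ∩ (-{f : V →ₗ[ℝ] W | f '' C ⊆ D}) = {0} ∧
    Submodule.span ℝ {f : V →ₗ[ℝ] W | f '' C ⊆ D} = ⊤ ∧
    Module.finrank ℝ (V →ₗ[ℝ] W) = Module.finrank ℝ V * Module.finrank ℝ W := by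
  exact ConeAux.main C D hC hD hCpointed hDpointed hCspan hDspan
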